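/- arXiv:1404.7092 — 4 statements merged into one kernel-verified Lean document; each statement's English description precedes it below -/
import Mathlib

section
/- The class of languages recognized by n-headed automata is closed under intersection with regular languages: given an n-headed automaton U over Σ and a finite automaton V over Σ, there exists an n-headed automaton W with L(W) = L(U) ∩ L(V). -/
/-- A (nondeterministic, possibly ε-transition) automaton: states `S`,
alphabet `A`, transition relation (with `none` standing for ε),
initial state, and final states. -/
structure NAuto (S A : Type*) where
  step : S → Option A → S → Prop
  start : S
  final : S → Prop

/-- `Reaches M s w s'`: the automaton can go from `s` to `s'` reading the word `w`
(possibly using ε-transitions). -/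
inductive NAuto.Reaches {S A : Type*} (M : NAuto S A) : S → List A → S → Prop
  | refl (s : S) : Reaches M s [] s
  | eps {s s' s'' : S} {w : List A} :
      M.step s none s' → Reaches M s' w s'' → Reaches M s w s''
  | cons {s s' s'' : S} {a : A} {w : List A} :
      M.step s (some a) s' → Reaches M s' w s'' → Reaches M s (a :: w) s''

/-- The language of an automaton. -/
def NAuto.lang {S A : Type*} (M : NAuto S A) : Set (List A) :=
  {w | ∃ s, M.Reaches M.start w s ∧ M.final s}

/-- The language of an `n`-headed automaton over `A`, i.e. an automaton over
the alphabet `Fin n × A`: a word of the language is obtained from an accepted word `σ`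
by concatenating, for each head index `i` in increasing order, the `A`-components of
the letters of `σ` carrying head index `i`. -/
def mhLang {S A : Type*} (n : ℕ) (M : NAuto S (Fin n × A)) : Set (List A) :=
  {w | ∃ σ s, M.Reaches M.start σ s ∧ M.final s ∧
      w = ((List.finRange n).map
            (fun i => (σ.filter (fun p => decide (p.1 = i))).map Prod.snd)).flatten}

namespace NAuto
variable {S A : Type*} {M : NAuto S A}

lemma Reaches.append {s s' t : S} {u v : List A}
    (h : M.Reaches s u s') (h' : M.Reaches s' v t) : M.Reaches s (u ++ v) t := by
  induction h with
  | refl => simpa using h'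
  | eps hst _ ih => exact Reaches.eps hst (ih h')
  | cons hst _ ih => exact Reaches.cons hst (ih h')

lemma Reaches.cons_inv' {s t : S} {w : List A} (h : M.Reaches s w t) :
    ∀ (a : A) (w' : List A), w = a :: w' →
      ∃ p q, M.Reaches s [] p ∧ M.step p (some a) q ∧ M.Reaches q w' t := by
  induction h with
  | refl => intro a w' hw; cases hw
  | eps hst _ ih =>
    intro a w' hw
    obtain ⟨p, q, h1, h2, h3⟩ := ih a w' hw
    exact ⟨p, q, Reaches.eps hst h1, h2, h3⟩
  | cons hst hr _ =>
    intro a w' hw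
    cases hw
    exact ⟨_, _, Reaches.refl _, hst, hr⟩

lemma Reaches.split {s t : S} {u v : List A} (h : M.Reaches s (u ++ v) t) :
    ∃ m, M.Reaches s u m ∧ M.Reaches m v t := by
  induction u generalizing s with
  | nil => exact ⟨s, Reaches.refl _, h⟩
  | cons a u' ih =>
    obtain ⟨p, q, h1, h2, h3⟩ := h.cons_inv' a (u' ++ v) rfl
    obtain ⟨m, h4, h5⟩ := ih h3
    exact ⟨m, h1.append (Reaches.cons h2 h4), h5⟩

lemma reaches_chain : ∀ (n : ℕ) (b : Fin (n+1) → S) (f : Fin n → List A),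
    (∀ i : Fin n, M.Reaches (b i.castSucc) (f i) (b i.succ)) →
    M.Reaches (b 0) (((List.finRange n).map f).flatten) (b (Fin.last n)) := by
  intro n
  induction n with
  | zero => intro b f _; simpa [Fin.last] using Reaches.refl (b 0)
  | succ n ih =>
    intro b f hf
    have h0 := hf 0
    have hrest := ih (fun j => b j.succ) (fun j => f j.succ)
      (fun j => by have := hf j.succ; rw [← Fin.succ_castSucc] at this; exact this)
    rw [List.finRange_succ, List.map_cons, List.map_map, List.flatten_cons]
    have hlast : (Fin.last n).succ = Fin.last (n+1) := by
      ext; simp [Fin.last]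
    have : M.Reaches (b (0 : Fin (n+1)).castSucc) (f 0 ++ ((List.finRange n).map (f ∘ Fin.succ)).flatten) (b (Fin.last (n+1))) := by
      refine h0.append ?_
      rw [← hlast]
      exact hrest
    simpa using this

lemma reaches_unchain : ∀ (n : ℕ) (q t : S) (f : Fin n → List A),
    M.Reaches q (((List.finRange n).map f).flatten) t →
    ∃ b : Fin (n+1) → S, b 0 = q ∧ M.Reaches (b (Fin.last n)) [] t ∧
      ∀ i : Fin n, M.Reaches (b i.castSucc) (f i) (b i.succ) := by
  intro n
  induction n with
  | zero =>
    intro q t f h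
    exact ⟨fun _ => q, rfl, by simpa using h, fun i => i.elim0⟩
  | succ n ih =>
    intro q t f h
    rw [List.finRange_succ, List.map_cons, List.map_map, List.flatten_cons] at h
    obtain ⟨m, h1, h2⟩ := h.split
    obtain ⟨b', hb0, hblast, hbseg⟩ := ih m t (fun j => f j.succ) (by exact h2)
    refine ⟨Fin.cases q b', by simp, ?_, ?_⟩
    · have : Fin.last (n+1) = (Fin.last n).succ := by ext; simp [Fin.last]
      rw [this]; show M.Reaches (Fin.cases q b' (Fin.last n).succ) [] t; rw [Fin.cases_succ]; exact hblast
    · intro i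
      induction i using Fin.cases with
      | zero =>
        have : (0 : Fin (n+1)).castSucc = (0 : Fin (n+2)) := by ext; simp
        rw [this]
        show M.Reaches (Fin.cases q b' 0) (f 0) (Fin.cases q b' (Fin.succ 0))
        rw [Fin.cases_zero, Fin.cases_succ, hb0]
        exact h1
      | succ j =>
        have h1' : (j.succ).castSucc = (j.castSucc).succ := (Fin.succ_castSucc j).symm
        rw [h1']
        show M.Reaches (Fin.cases q b' j.castSucc.succ) (f j.succ) (Fin.cases q b' j.succ.succ)
        rw [Fin.cases_succ, Fin.cases_succ]
        exact hbseg j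

end NAuto


section
variable {SU SV A : Type*} {n : ℕ}

/-- Projection of a multi-headed word onto the letters of head `i`. -/
def mhProj (i : Fin n) (σ : List (Fin n × A)) : List A :=
  (σ.filter (fun p => decide (p.1 = i))).map Prod.snd

@[simp] lemma mhProj_nil (i : Fin n) : mhProj i ([] : List (Fin n × A)) = [] := rfl

lemma mhProj_cons (i j : Fin n) (a : A) (σ : List (Fin n × A)) :
    mhProj i ((j, a) :: σ) = if j = i then a :: mhProj i σ else mhProj i σ := by
  by_cases h : j = i <;> simp [mhProj, h]

/-- State space of the product automaton. -/
abbrev WState (SU SV : Type*) (n : ℕ) :=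
  Option (SU × (Fin n → SV) × (Fin (n+1) → SV))

/-- Transitions of the product automaton. -/
inductive WStep (U : NAuto SU (Fin n × A)) (V : NAuto SV A) :
    WState SU SV n → Option (Fin n × A) → WState SU SV n → Prop
  | init (b : Fin (n+1) → SV) (hb : b 0 = V.start) :
      WStep U V none none (some (U.start, fun i => b i.castSucc, b))
  | uEps {s s' : SU} {c : Fin n → SV} {b : Fin (n+1) → SV} :
      U.step s none s' → WStep U V (some (s, c, b)) none (some (s', c, b))
  | vEps {s : SU} {c : Fin n → SV} {b : Fin (n+1) → SV} (i : Fin n) {q : SV} :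
      V.step (c i) none q →
      WStep U V (some (s, c, b)) none (some (s, Function.update c i q, b))
  | read {s s' : SU} {c : Fin n → SV} {b : Fin (n+1) → SV} (i : Fin n) (a : A) {q : SV} :
      U.step s (some (i, a)) s' → V.step (c i) (some a) q →
      WStep U V (some (s, c, b)) (some (i, a)) (some (s', Function.update c i q, b))

/-- The product automaton. -/
def Wauto (U : NAuto SU (Fin n × A)) (V : NAuto SV A) : NAuto (WState SU SV n) (Fin n × A) where
  step := WStep U V
  start := none
  final x := ∃ s c b, x = some (s, c, b) ∧ U.final s ∧ (∀ i, c i = b i.succ) ∧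
    ∃ t, V.Reaches (b (Fin.last n)) [] t ∧ V.final t

variable {U : NAuto SU (Fin n × A)} {V : NAuto SV A}

/-- Lift an ε-run of `V` at head `i` to an ε-run of `W`. -/
lemma wauto_lift_eps {p p' : SV} {w : List A} (hp : V.Reaches p w p') (hw : w = []) :
    ∀ (s : SU) (c : Fin n → SV) (b : Fin (n+1) → SV) (i : Fin n), c i = p →
    (Wauto U V).Reaches (some (s, c, b)) [] (some (s, Function.update c i p', b)) := by
  induction hp with
  | refl =>
    intro s c b i hci
    rw [← hci, Function.update_eq_self]
    exact NAuto.Reaches.refl _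
  | eps hst _ ih =>
    intro s c b i hci
    refine NAuto.Reaches.eps (WStep.vEps i (by rw [hci]; exact hst)) ?_
    have := ih hw s (Function.update c i _) b i (Function.update_self i _ c)
    rwa [Function.update_idem] at this
  | cons _ _ _ => cases hw

/-- Lift ε-runs of `V` at all heads to an ε-run of `W`. -/
lemma wauto_lift_eps_all (l : List (Fin n)) (hl : l.Nodup) :
    ∀ (s : SU) (c c' : Fin n → SV) (b : Fin (n+1) → SV),
    (∀ i ∈ l, V.Reaches (c i) [] (c' i)) → (∀ i ∉ l, c i = c' i) →
    (Wauto U V).Reaches (some (s, c, b)) [] (some (s, c', b)) := by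
  induction l with
  | nil =>
    intro s c c' b _ h2
    have : c = c' := funext fun i => h2 i (by simp)
    rw [this]; exact NAuto.Reaches.refl _
  | cons i l ih =>
    intro s c c' b h1 h2
    rcases List.nodup_cons.mp hl with ⟨hi, hl'⟩
    have step1 : (Wauto U V).Reaches (some (s, c, b)) []
        (some (s, Function.update c i (c' i), b)) :=
      wauto_lift_eps (h1 i (by simp)) rfl s c b i rfl
    have step2 : (Wauto U V).Reaches (some (s, Function.update c i (c' i), b)) []
        (some (s, c', b)) := by
      refine ih hl' s _ c' b ?_ ?_
      · intro j hj
        have hji : j ≠ i := fun h => hi (h ▸ hj)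
        rw [Function.update_of_ne hji]
        exact h1 j (by simp [hj])
      · intro j hj
        by_cases hji : j = i
        · subst hji; simp
        · rw [Function.update_of_ne hji]
          exact h2 j (by simp [hj, hji])
    have := step1.append step2
    simpa using this

/-- Backward simulation: combine a `U`-run and per-head `V`-runs into a `W`-run. -/
lemma wauto_bwd {s s' : SU} {σ : List (Fin n × A)} (h : U.Reaches s σ s') :
    ∀ (c c' : Fin n → SV) (b : Fin (n+1) → SV),
    (∀ i, V.Reaches (c i) (mhProj i σ) (c' i)) →
    (Wauto U V).Reaches (some (s, c, b)) σ (some (s', c', b)) := by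
  induction h with
  | refl =>
    intro c c' b hv
    exact wauto_lift_eps_all (List.finRange n) (List.nodup_finRange n) _ c c' b
      (fun i _ => by simpa using hv i) (fun i hi => absurd (List.mem_finRange i) hi)
  | eps hst _ ih =>
    intro c c' b hv
    exact NAuto.Reaches.eps (WStep.uEps hst) (ih c c' b hv)
  | @cons sa s₂ sb ia σ' hst _ ih =>
    intro c c' b hv
    obtain ⟨i, a⟩ := ia
    have hvi : V.Reaches (c i) (a :: mhProj i σ') (c' i) := by
      have := hv i; rwa [mhProj_cons, if_pos rfl] at this
    obtain ⟨p, q, h1, h2, h3⟩ := hvi.cons_inv' a (mhProj i σ') rfl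
    -- ε-moves bringing head i from c i to p
    have e1 : (Wauto U V).Reaches (some (sa, c, b)) []
        (some (sa, Function.update c i p, b)) :=
      wauto_lift_eps h1 rfl sa c b i rfl
    -- the read move
    have e2 : WStep U V (some (sa, Function.update c i p, b)) (some (i, a))
        (some (s₂, Function.update (Function.update c i p) i q, b)) :=
      WStep.read i a hst (by rw [Function.update_self]; exact h2)
    rw [Function.update_idem] at e2
    -- the rest by IH
    have e3 : (Wauto U V).Reaches (some (s₂, Function.update c i q, b)) σ'
        (some (sb, c', b)) := by
      refine ih (Function.update c i q) c' b fun j => ?_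
      by_cases hji : j = i
      · subst hji; rw [Function.update_self]; exact h3
      · rw [Function.update_of_ne hji]
        have := hv j; rwa [mhProj_cons, if_neg (fun h => hji h.symm)] at this
    have := e1.append (NAuto.Reaches.cons e2 e3)
    simpa using this

/-- Forward simulation. -/
lemma wauto_fwd {x y : WState SU SV n} {σ : List (Fin n × A)}
    (h : (Wauto U V).Reaches x σ y) :
    ∀ (s : SU) (c : Fin n → SV) (b : Fin (n+1) → SV), x = some (s, c, b) →
    ∃ s' c', y = some (s', c', b) ∧ U.Reaches s σ s' ∧
      ∀ i, V.Reaches (c i) (mhProj i σ) (c' i) := by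
  induction h with
  | refl =>
    intro s c b hx
    exact ⟨s, c, hx, NAuto.Reaches.refl _, fun i => by simpa using NAuto.Reaches.refl (c i)⟩
  | @eps x₁ x₂ _ _ hst _ ih =>
    intro s c b hx
    subst hx
    cases hst with
    | uEps h =>
      obtain ⟨s', c', hy, hu, hv⟩ := ih _ _ _ rfl
      exact ⟨s', c', hy, NAuto.Reaches.eps h hu, hv⟩
    | vEps i h =>
      obtain ⟨s', c', hy, hu, hv⟩ := ih _ _ _ rfl
      refine ⟨s', c', hy, hu, fun j => ?_⟩
      by_cases hji : j = i
      · subst hji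
        have := hv j
        rw [Function.update_self] at this
        exact NAuto.Reaches.eps h this
      · have := hv j
        rwa [Function.update_of_ne hji] at this
  | @cons x₁ x₂ _ ia σ' hst _ ih =>
    intro s c b hx
    subst hx
    cases hst with
    | read i a hu hv =>
      obtain ⟨s', c', hy, hur, hvr⟩ := ih _ _ _ rfl
      refine ⟨s', c', hy, NAuto.Reaches.cons hu hur, fun j => ?_⟩
      by_cases hji : j = i
      · subst hji
        rw [mhProj_cons, if_pos rfl]
        have := hvr j
        rw [Function.update_self] at this
        exact NAuto.Reaches.cons hv this
      · rw [mhProj_cons, if_neg (fun h => hji h.symm)]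
        have := hvr j
        rwa [Function.update_of_ne hji] at this

end


section
variable {SU SV A : Type*} {n : ℕ}

lemma wauto_lang (U : NAuto SU (Fin n × A)) (V : NAuto SV A) :
    mhLang n (Wauto U V) = mhLang n U ∩ V.lang := by
  ext w
  constructor
  · rintro ⟨σ, x, hr, hf, hw⟩
    cases hr with
    | refl =>
      obtain ⟨s, c, b, hx, -⟩ := hf
      exact absurd hx (by simp [Wauto])
    | eps hst hr' =>
      cases hst with
      | init b hb =>
        obtain ⟨s', c', hx, hu, hv⟩ := wauto_fwd hr' _ _ _ rfl
        obtain ⟨s₂, c₂, b₂, hx₂, hfu, hcb, t, hbt, hft⟩ := hf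
        rw [hx] at hx₂
        obtain ⟨hs, hc, hb₂⟩ : s' = s₂ ∧ c' = c₂ ∧ b = b₂ := by
          have := Option.some.inj hx₂
          exact ⟨congrArg Prod.fst this, congrArg (Prod.fst ∘ Prod.snd) this,
            congrArg (Prod.snd ∘ Prod.snd) this⟩
        subst hs; subst hb₂; subst hc
        refine ⟨⟨σ, s', hu, hfu, hw⟩, t, ?_, hft⟩
        have hchain : V.Reaches (b 0) (((List.finRange n).map (fun i => mhProj i σ)).flatten)
            (b (Fin.last n)) := by
          refine NAuto.reaches_chain n b _ fun i => ?_
          rw [← hcb i]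
          exact hv i
        rw [hb] at hchain
        have := hchain.append hbt
        rw [List.append_nil] at this
        rwa [hw]
    | cons hst _ => cases hst
  · rintro ⟨⟨σ, s', hu, hfu, hw⟩, t, hv, hft⟩
    have hv' : V.Reaches V.start (((List.finRange n).map (fun i => mhProj i σ)).flatten) t := by
      rwa [hw] at hv
    obtain ⟨b, hb0, hbt, hseg⟩ := NAuto.reaches_unchain n V.start t _ hv'
    refine ⟨σ, some (s', fun i => b i.succ, b), ?_, ?_, hw⟩
    · refine NAuto.Reaches.eps (WStep.init b hb0) ?_
      exact wauto_bwd hu _ _ b fun i => hseg i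
    · exact ⟨s', fun i => b i.succ, b, rfl, hfu, fun i => rfl, t, hbt, hft⟩

end

section
variable {S T A : Type*}

/-- Transport an automaton along an equivalence of state spaces. -/
def NAuto.equivMap (e : S ≃ T) (M : NAuto S A) : NAuto T A where
  step t o t' := M.step (e.symm t) o (e.symm t')
  start := e M.start
  final t := M.final (e.symm t)

lemma NAuto.equivMap_reaches_iff (e : S ≃ T) (M : NAuto S A) {t t' : T} {w : List A} :
    (M.equivMap e).Reaches t w t' ↔ M.Reaches (e.symm t) w (e.symm t') := by
  constructor
  · intro h
    induction h with
    | refl => exact NAuto.Reaches.refl _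
    | eps hst _ ih => exact NAuto.Reaches.eps hst ih
    | cons hst _ ih => exact NAuto.Reaches.cons hst ih
  · intro h
    have key : ∀ {s s' : S} {w : List A}, M.Reaches s w s' →
        (M.equivMap e).Reaches (e s) w (e s') := by
      intro s s' w h
      induction h with
      | refl => exact NAuto.Reaches.refl _
      | eps hst _ ih => exact NAuto.Reaches.eps (by simpa [NAuto.equivMap] using hst) ih
      | cons hst _ ih => exact NAuto.Reaches.cons (by simpa [NAuto.equivMap] using hst) ih
    have := key h
    simpa using this

lemma NAuto.equivMap_mhLang (e : S ≃ T) {n : ℕ} {B : Type*} (M : NAuto S (Fin n × B)) :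
    mhLang n (M.equivMap e) = mhLang n M := by
  ext w
  constructor
  · rintro ⟨σ, s, hr, hf, hw⟩
    rw [NAuto.equivMap_reaches_iff] at hr
    exact ⟨σ, e.symm s, by simpa [NAuto.equivMap] using hr, hf, hw⟩
  · rintro ⟨σ, s, hr, hf, hw⟩
    refine ⟨σ, e s, ?_, by simpa [NAuto.equivMap] using hf, hw⟩
    rw [NAuto.equivMap_reaches_iff]
    simpa [NAuto.equivMap] using hr

end

/-- languages of n-headed automata are closed under intersection
with regular languages: for an n-headed automaton `U` and a finite automaton `V`
over a common alphabet, there is an n-headed automaton `W` with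
`L(W) = L(U) ∩ L(V)`. -/
theorem mh_inter_regular {SU SV A : Type*} [Fintype SU] [Fintype SV]
    (n : ℕ) (U : NAuto SU (Fin n × A)) (V : NAuto SV A) :
    ∃ (SW : Type) (_ : Fintype SW) (W : NAuto SW (Fin n × A)),
      mhLang n W = mhLang n U ∩ V.lang := by
  classical
  set SW : Type := Option (Fin (Fintype.card SU) ×
      (Fin n → Fin (Fintype.card SV)) × (Fin (n+1) → Fin (Fintype.card SV))) with hSW
  have e : WState SU SV n ≃ SW :=
    Equiv.optionCongr ((Fintype.equivFin SU).prodCongr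
      (((Equiv.refl (Fin n)).arrowCongr (Fintype.equivFin SV)).prodCongr
        ((Equiv.refl (Fin (n+1))).arrowCongr (Fintype.equivFin SV))))
  refine ⟨SW, inferInstance, (Wauto U V).equivMap e, ?_⟩
  rw [NAuto.equivMap_mhLang, wauto_lang]
end

section
/- For the n-headed automaton W recognizing L(U) ∩ L(V) (intersection of an n-headed automaton language with a regular language), the number of states of W can be bounded by |S_U| · |S_V|^{2n} + 1, where S_U and S_V are the state sets of U and V respectively. -/
namespace MHAux

variable {SU SV A : Type*}

/-- head word -/
def hw {n : ℕ} (σ : List (Fin n × A)) (i : Fin n) : List A :=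
  (σ.filter (fun p => decide (p.1 = i))).map Prod.snd

theorem hw_nil {n : ℕ} (i : Fin n) : hw ([] : List (Fin n × A)) i = [] := rfl

theorem hw_cons {n : ℕ} (i j : Fin n) (a : A) (σ : List (Fin n × A)) :
    hw ((i, a) :: σ) j = if i = j then a :: hw σ j else hw σ j := by
  by_cases h : i = j <;> simp [hw, List.filter_cons, h]

/-- boundary states: `dBf V n f 0 = V.start`, `dBf V n f j = f (j-1)` for `1 ≤ j ≤ n`. -/
def dBf (V : NAuto SV A) (n : ℕ) (f : Fin n → SV) (j : ℕ) : SV :=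
  if h : 0 < j ∧ j ≤ n then f ⟨j - 1, by omega⟩ else V.start

theorem NAuto.Reaches.trans {S B : Type*} {M : NAuto S B} {s s' s'' : S} {w1 w2 : List B}
    (h1 : M.Reaches s w1 s') (h2 : M.Reaches s' w2 s'') : M.Reaches s (w1 ++ w2) s'' := by
  induction h1 with
  | refl => simpa using h2
  | eps hstep _ ih => exact NAuto.Reaches.eps hstep (ih h2)
  | cons hstep _ ih => exact NAuto.Reaches.cons hstep (ih h2)

theorem reaches_cons_decomp {S B : Type*} {M : NAuto S B} {s t : S} {w' : List B}
    (h : M.Reaches s w' t) : ∀ (a : B) (w : List B), w' = a :: w →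
    ∃ v₁ v₂, M.Reaches s [] v₁ ∧ M.step v₁ (some a) v₂ ∧ M.Reaches v₂ w t := by
  induction h with
  | refl => intro a w h; cases h
  | eps hstep _ ih =>
      intro a w hw
      obtain ⟨v₁, v₂, h1, h2, h3⟩ := ih a w hw
      exact ⟨v₁, v₂, NAuto.Reaches.eps hstep h1, h2, h3⟩
  | cons hstep hr _ =>
      intro a w hw
      cases hw
      exact ⟨_, _, NAuto.Reaches.refl _, hstep, hr⟩

theorem reaches_append_decomp {S B : Type*} {M : NAuto S B} {s t : S} {w' : List B}
    (h : M.Reaches s w' t) : ∀ (w1 w2 : List B), w' = w1 ++ w2 →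
    ∃ v, M.Reaches s w1 v ∧ M.Reaches v w2 t := by
  induction h with
  | refl =>
      intro w1 w2 h
      rw [List.nil_eq_append_iff] at h  -- maybe name differs
      obtain ⟨rfl, rfl⟩ := h
      exact ⟨_, NAuto.Reaches.refl _, NAuto.Reaches.refl _⟩
  | eps hstep _ ih =>
      intro w1 w2 hw
      obtain ⟨v, h1, h2⟩ := ih w1 w2 hw
      exact ⟨v, NAuto.Reaches.eps hstep h1, h2⟩
  | cons hstep hr ih =>
      intro w1 w2 hw
      cases w1 with
      | nil =>
          simp only [List.nil_append] at hw
          subst hw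
          exact ⟨_, NAuto.Reaches.refl _, NAuto.Reaches.cons hstep hr⟩
      | cons b w1' =>
          rw [List.cons_append] at hw
          injection hw with h1 h2
          subst h1
          obtain ⟨v, h1, h2⟩ := ih w1' w2 h2
          exact ⟨v, NAuto.Reaches.cons hstep h1, h2⟩

/-- split a run on a flatten into boundary states -/
theorem reaches_flatten_decomp {S B : Type*} {M : NAuto S B} :
    ∀ (ws : List (List B)) (v s : S), M.Reaches v ws.flatten s →
      ∃ b : ℕ → S, b 0 = v ∧ M.Reaches (b ws.length) [] s ∧
        ∀ k (h : k < ws.length), M.Reaches (b k) ws[k] (b (k + 1)) := by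
  intro ws
  induction ws with
  | nil =>
      intro v s h
      exact ⟨fun _ => v, rfl, by simpa using h, fun k h => absurd h (by simp)⟩
  | cons w ws ih =>
      intro v s h
      rw [List.flatten_cons] at h
      obtain ⟨v₁, h1, h2⟩ := reaches_append_decomp h w ws.flatten rfl
      obtain ⟨b, hb0, hbend, hbk⟩ := ih v₁ s h2
      refine ⟨fun k => if k = 0 then v else b (k - 1), rfl, by simpa using hbend, ?_⟩
      intro k hk
      match k with
      | 0 => simpa [hb0] using h1
      | k + 1 => simpa using hbk k (by simpa using hk)


section Constr

variable {n : ℕ} (U : NAuto SU (Fin n × A)) (V : NAuto SV A)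

def Wstep : Option (SU × (Fin n → SV) × (Fin n → SV)) → Option (Fin n × A) →
    Option (SU × (Fin n → SV) × (Fin n → SV)) → Prop
  | none, none, some (u, f, g) => u = U.start ∧ g = fun i => dBf V n f i.val
  | some (u, f, g), none, some (u', f', g') =>
      f' = f ∧ ((U.step u none u' ∧ g' = g) ∨
        (u' = u ∧ ∃ i v, V.step (g i) none v ∧ g' = Function.update g i v))
  | some (u, f, g), some x, some (u', f', g') =>
      f' = f ∧ U.step u (some x) u' ∧
        ∃ v, V.step (g x.1) (some x.2) v ∧ g' = Function.update g x.1 v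
  | _, _, _ => False

def Wauto : NAuto (Option (SU × (Fin n → SV) × (Fin n → SV))) (Fin n × A) where
  step := Wstep U V
  start := none
  final := fun s => match s with
    | none => False
    | some (u, f, g) =>
        U.final u ∧ g = f ∧ ∃ t, V.Reaches (dBf V n f n) [] t ∧ V.final t

/-- soundness: a W-run from an inner state projects to a U-run and per-head V-runs. -/
theorem wauto_sound {st σ t} (h : (Wauto U V).Reaches st σ t) :
    ∀ u f g, st = some (u, f, g) →
    ∃ u' g', t = some (u', f, g') ∧ U.Reaches u σ u' ∧
      ∀ i, V.Reaches (g i) (hw σ i) (g' i) := by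
  induction h with
  | refl s =>
      intro u f g hst
      subst hst
      exact ⟨u, g, rfl, NAuto.Reaches.refl _, fun i => NAuto.Reaches.refl _⟩
  | @eps s s' s'' w hstep hr ih =>
      intro u f g hst
      subst hst
      match s', hstep with
      | some (u₁, f₁, g₁), hstep =>
        obtain ⟨hf, hc⟩ := hstep
        subst hf
        rcases hc with ⟨hU, rfl⟩ | ⟨rfl, i, v, hV, rfl⟩
        · obtain ⟨u', g', rfl, hUr, hVr⟩ := ih u₁ f₁ g₁ rfl
          exact ⟨u', g', rfl, NAuto.Reaches.eps hU hUr, hVr⟩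
        · obtain ⟨u', g', rfl, hUr, hVr⟩ := ih _ f₁ _ rfl
          refine ⟨u', g', rfl, hUr, fun j => ?_⟩
          by_cases hj : j = i
          · subst hj
            have := hVr j
            rw [Function.update_self] at this
            exact NAuto.Reaches.eps hV this
          · have := hVr j
            rwa [Function.update_of_ne hj] at this
  | @cons s s' s'' x w hstep hr ih =>
      intro u f g hst
      subst hst
      obtain ⟨i, a⟩ := x
      match s', hstep with
      | some (u₁, f₁, g₁), hstep =>
        obtain ⟨hf, hU, v, hV, hg⟩ := hstep
        subst hf
        dsimp only at hV hg
        subst hg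
        obtain ⟨u', g', rfl, hUr, hVr⟩ := ih u₁ f₁ _ rfl
        refine ⟨u', g', rfl, NAuto.Reaches.cons hU hUr, fun j => ?_⟩
        rw [hw_cons]
        by_cases hj : i = j
        · subst hj
          have := hVr i
          rw [Function.update_self] at this
          simp only [if_pos rfl]
          exact NAuto.Reaches.cons hV this
        · have := hVr j
          rw [Function.update_of_ne (Ne.symm hj)] at this
          simpa [hj] using this

/-- advance a single coordinate by V ε-moves -/
theorem wauto_eps_advance_aux {v v' : SV} {w : List A} (hr : V.Reaches v w v') :
    w = [] → ∀ (u : SU) (f g : Fin n → SV) (i : Fin n), g i = v →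
      (Wauto U V).Reaches (some (u, f, g)) [] (some (u, f, Function.update g i v')) := by
  induction hr with
  | refl s =>
      intro _ u f g i hg
      subst hg
      rw [Function.update_eq_self]
      exact NAuto.Reaches.refl _
  | @eps s s' s'' w hstep hr ih =>
      intro hwnil u f g i hg
      subst hwnil
      have step1 : (Wauto U V).step (some (u, f, g)) none
          (some (u, f, Function.update g i s')) := by
        exact ⟨rfl, Or.inr ⟨rfl, i, s', hg ▸ hstep, rfl⟩⟩
      have := ih rfl u f (Function.update g i s') i (Function.update_self _ _ _)
      rw [Function.update_idem] at this
      exact NAuto.Reaches.eps step1 this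
  | cons hstep hr ih => intro hwnil; cases hwnil

theorem wauto_eps_advance {v v' : SV} (hr : V.Reaches v [] v')
    (u : SU) (f g : Fin n → SV) (i : Fin n) (hg : g i = v) :
    (Wauto U V).Reaches (some (u, f, g)) [] (some (u, f, Function.update g i v')) :=
  wauto_eps_advance_aux U V hr rfl u f g i hg

/-- advance all coordinates by V ε-moves -/
theorem wauto_eps_many (u : SU) (f : Fin n → SV) :
    ∀ (l : List (Fin n)) (g g' : Fin n → SV),
      (∀ i, V.Reaches (g i) [] (g' i)) → (∀ i, i ∉ l → g i = g' i) →
      (Wauto U V).Reaches (some (u, f, g)) [] (some (u, f, g')) := by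
  intro l
  induction l with
  | nil =>
      intro g g' _ h2
      have : g = g' := funext fun i => h2 i (by simp)
      subst this
      exact NAuto.Reaches.refl _
  | cons j l ih =>
      intro g g' h1 h2
      have step1 := wauto_eps_advance U V (h1 j) u f g j rfl
      have step2 : (Wauto U V).Reaches (some (u, f, Function.update g j (g' j))) []
          (some (u, f, g')) := by
        apply ih
        · intro i
          by_cases hi : i = j
          · subst hi; rw [Function.update_self]; exact NAuto.Reaches.refl _
          · rw [Function.update_of_ne hi]; exact h1 i
        · intro i hi
          by_cases hij : i = j
          · subst hij; rw [Function.update_self]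
          · rw [Function.update_of_ne hij]
            exact h2 i (by simp [hij, hi])
      simpa using NAuto.Reaches.trans step1 step2

/-- completeness: a U-run plus compatible per-head V-runs yield a W-run. -/
theorem wauto_complete {σ : List (Fin n × A)} {u u' : SU} (h : U.Reaches u σ u') :
    ∀ (f g g' : Fin n → SV), (∀ i, V.Reaches (g i) (hw σ i) (g' i)) →
      (Wauto U V).Reaches (some (u, f, g)) σ (some (u', f, g')) := by
  induction h with
  | refl s =>
      intro f g g' hV
      exact wauto_eps_many U V s f (List.finRange n) g g'
        (fun i => by simpa [hw_nil] using hV i) (fun i hi => absurd (List.mem_finRange i) hi)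
  | @eps s s' s'' w hstep hr ih =>
      intro f g g' hV
      have stepE : (Wauto U V).step (some (s, f, g)) none (some (s', f, g)) :=
        ⟨rfl, Or.inl ⟨hstep, rfl⟩⟩
      exact NAuto.Reaches.eps stepE (ih f g g' hV)
  | @cons s s' s'' x w hstep hr ih =>
      intro f g g' hV
      obtain ⟨i, a⟩ := x
      have hVi := hV i
      rw [hw_cons, if_pos rfl] at hVi
      obtain ⟨v₁, v₂, hv1, hv2, hv3⟩ := reaches_cons_decomp hVi a _ rfl
      have stepA := wauto_eps_advance U V hv1 s f g i rfl
      have stepB : (Wauto U V).step (some (s, f, Function.update g i v₁)) (some (i, a))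
          (some (s', f, Function.update g i v₂)) := by
        refine ⟨rfl, hstep, v₂, ?_, by rw [Function.update_idem]⟩
        rw [Function.update_self]
        exact hv2
      have stepC : (Wauto U V).Reaches (some (s', f, Function.update g i v₂)) w
          (some (s'', f, g')) := by
        apply ih
        intro j
        by_cases hj : j = i
        · subst hj; rw [Function.update_self]; exact hv3
        · rw [Function.update_of_ne hj]
          have := hV j
          rwa [hw_cons, if_neg (fun h => hj h.symm)] at this
      simpa using NAuto.Reaches.trans stepA (NAuto.Reaches.cons stepB stepC)

theorem dBf_zero (f : Fin n → SV) : dBf V n f 0 = V.start := by simp [dBf]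

theorem dBf_succ (f : Fin n → SV) (i : Fin n) : dBf V n f (i.val + 1) = f i := by
  have h : 0 < i.val + 1 ∧ i.val + 1 ≤ n := ⟨Nat.succ_pos _, i.isLt⟩
  simp only [dBf, dif_pos h]
  congr 1

theorem chain_reaches (f : Fin n → SV) (hwf : Fin n → List A)
    (h : ∀ i : Fin n, V.Reaches (dBf V n f i.val) (hwf i) (dBf V n f (i.val + 1))) :
    ∀ k j, j ≤ n → n - j = k →
      V.Reaches (dBf V n f j) ((((List.finRange n).drop j).map hwf).flatten) (dBf V n f n) := by
  intro k
  induction k with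
  | zero =>
      intro j hj hk
      have hjn : j = n := by omega
      subst hjn
      rw [List.drop_of_length_le (by simp)]
      exact NAuto.Reaches.refl _
  | succ k ih =>
      intro j hj hk
      have hjn : j < n := by omega
      have hlen : j < (List.finRange n).length := by simpa using hjn
      rw [List.drop_eq_getElem_cons hlen, List.map_cons, List.flatten_cons]
      have hget : (List.finRange n)[j] = ⟨j, hjn⟩ := by
        simp [List.getElem_finRange, Fin.cast]
      rw [hget]
      have h1 := h ⟨j, hjn⟩
      have h2 := ih (j + 1) (by omega) (by omega)
      exact NAuto.Reaches.trans h1 h2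

theorem wauto_lang : mhLang n (Wauto U V) = mhLang n U ∩ V.lang := by
  ext w
  constructor
  · rintro ⟨σ, t, hrun, hfin, hww⟩
    cases hrun with
    | refl => exact hfin.elim
    | @eps _ s' _ _ hstep hr =>
        match s', hstep with
        | none, hstep => exact hstep.elim
        | some (u₀, f, g₀), hstep =>
          obtain ⟨rfl, rfl⟩ := hstep
          obtain ⟨u', g', rfl, hUr, hVr⟩ := wauto_sound U V hr _ _ _ rfl
          obtain ⟨hUfin, rfl, tF, htF, hVfin⟩ := hfin
          constructor
          · exact ⟨σ, u', hUr, hUfin, hww⟩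
          · refine ⟨tF, ?_, hVfin⟩
            have hVr' : ∀ i : Fin n,
                V.Reaches (dBf V n g' i.val) (hw σ i) (dBf V n g' (i.val + 1)) := by
              intro i
              rw [dBf_succ]
              exact hVr i
            have hchain := chain_reaches V g' (hw σ) hVr' n 0 (by omega) (by omega)
            rw [dBf_zero, List.drop_zero] at hchain
            have := NAuto.Reaches.trans hchain htF
            rw [List.append_nil] at this
            rw [hww]
            exact this
    | @cons _ s' _ _ _ hstep hr =>
        match s', hstep with
        | none, hstep => exact hstep.elim
        | some _, hstep => exact hstep.elim
  · rintro ⟨⟨σ, u', hUr, hUfin, hww⟩, sF, hVr, hVfin⟩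
    have hVr' : V.Reaches V.start (((List.finRange n).map (hw σ)).flatten) sF := by
      rw [hww] at hVr; exact hVr
    obtain ⟨b, hb0, hbend, hbk⟩ := reaches_flatten_decomp _ _ _ hVr'
    simp only [List.length_map, List.length_finRange] at hbend hbk
    set f : Fin n → SV := fun i => b (i.val + 1) with hf
    have hdbv : ∀ i : Fin n, dBf V n f i.val = b i.val := by
      intro i
      rcases Nat.eq_zero_or_pos i.val with h0 | h0
      · rw [h0, dBf_zero, hb0]
      · have h : 0 < i.val ∧ i.val ≤ n := ⟨h0, le_of_lt i.isLt⟩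
        simp only [dBf, dif_pos h, hf]
        congr 1
        omega
      
    have hdbn : dBf V n f n = b n := by
      rcases Nat.eq_zero_or_pos n with h0 | h0
      · subst h0; rw [dBf_zero, hb0]
      · have h : 0 < n ∧ n ≤ n := ⟨h0, le_refl n⟩
        simp only [dBf, dif_pos h, hf]
        congr 1
        omega
    have hchain : ∀ i : Fin n, V.Reaches (dBf V n f i.val) (hw σ i) (f i) := by
      intro i
      have hk := hbk i.val i.isLt
      have hgetw : (((List.finRange n).map (hw σ)))[i.val]'(by simp [i.isLt]) = hw σ i := by
        simp [List.getElem_finRange, Fin.cast]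
      rw [hgetw] at hk
      rw [hdbv]
      exact hk
    have hrun : (Wauto U V).Reaches (some (U.start, f, fun i => dBf V n f i.val)) σ
        (some (u', f, f)) := by
      apply wauto_complete U V hUr
      intro i
      exact hchain i
    have hstep0 : (Wauto U V).step none none (some (U.start, f, fun i => dBf V n f i.val)) :=
      ⟨rfl, rfl⟩
    refine ⟨σ, some (u', f, f), NAuto.Reaches.eps hstep0 hrun, ?_, hww⟩
    exact ⟨hUfin, rfl, sF, by rw [hdbn]; exact hbend, hVfin⟩


end Constr

/-- transport an automaton along an equivalence of state types -/
def congrAuto {S T B : Type*} (e : S ≃ T) (M : NAuto S B) : NAuto T B where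
  step t a t' := M.step (e.symm t) a (e.symm t')
  start := e M.start
  final t := M.final (e.symm t)

theorem congrAuto_reaches {S T B : Type*} (e : S ≃ T) (M : NAuto S B) {s s' : S} {w : List B}
    (h : M.Reaches s w s') : (congrAuto e M).Reaches (e s) w (e s') := by
  induction h with
  | refl s => exact NAuto.Reaches.refl _
  | eps hstep _ ih =>
      refine NAuto.Reaches.eps ?_ ih
      show M.step (e.symm (e _)) none (e.symm (e _))
      simpa using hstep
  | cons hstep _ ih =>
      refine NAuto.Reaches.cons ?_ ih
      show M.step (e.symm (e _)) (some _) (e.symm (e _))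
      simpa using hstep

theorem congrAuto_reaches_rev {S T B : Type*} (e : S ≃ T) (M : NAuto S B) {t t' : T}
    {w : List B} (h : (congrAuto e M).Reaches t w t') :
    M.Reaches (e.symm t) w (e.symm t') := by
  induction h with
  | refl s => exact NAuto.Reaches.refl _
  | eps hstep _ ih => exact NAuto.Reaches.eps hstep ih
  | cons hstep _ ih => exact NAuto.Reaches.cons hstep ih

theorem congrAuto_lang {S T B : Type*} (e : S ≃ T) (M : NAuto S B) :
    (congrAuto e M).lang = M.lang := by
  ext w
  constructor
  · rintro ⟨t, hr, hf⟩
    have := congrAuto_reaches_rev e M hr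
    simp only [congrAuto, Equiv.symm_apply_apply] at this
    exact ⟨e.symm t, this, hf⟩
  · rintro ⟨s, hr, hf⟩
    refine ⟨e s, congrAuto_reaches e M hr, ?_⟩
    show M.final (e.symm (e s))
    simpa using hf

theorem congrAuto_mhLang {S T A : Type*} (n : ℕ) (e : S ≃ T) (M : NAuto S (Fin n × A)) :
    mhLang n (congrAuto e M) = mhLang n M := by
  ext w
  constructor
  · rintro ⟨σ, t, hr, hf, hw⟩
    have := congrAuto_reaches_rev e M hr
    simp only [congrAuto, Equiv.symm_apply_apply] at this
    exact ⟨σ, e.symm t, this, hf, hw⟩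
  · rintro ⟨σ, s, hr, hf, hw⟩
    refine ⟨σ, e s, congrAuto_reaches e M hr, ?_, hw⟩
    show M.final (e.symm (e s))
    simpa using hf

end MHAux


/-- the n-headed automaton `W` recognizing `L(U) ∩ L(V)` can be chosen
with at most `|S_U| * |S_V| ^ (2 * n) + 1` states. -/
theorem mh_inter_regular_size {SU SV A : Type*} [Fintype SU] [Fintype SV]
    (n : ℕ) (U : NAuto SU (Fin n × A)) (V : NAuto SV A) :
    ∃ (SW : Type) (fW : Fintype SW) (W : NAuto SW (Fin n × A)),
      mhLang n W = mhLang n U ∩ V.lang ∧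
      @Fintype.card SW fW ≤ Fintype.card SU * Fintype.card SV ^ (2 * n) + 1 := by
  classical
  let eU := Fintype.equivFin SU
  let eV := Fintype.equivFin SV
  let U' := MHAux.congrAuto eU U
  let V' := MHAux.congrAuto eV V
  refine ⟨Option (Fin (Fintype.card SU) × (Fin n → Fin (Fintype.card SV)) ×
      (Fin n → Fin (Fintype.card SV))), inferInstance, MHAux.Wauto U' V', ?_, ?_⟩
  · rw [MHAux.wauto_lang, MHAux.congrAuto_mhLang, MHAux.congrAuto_lang]
  · apply le_of_eq
    simp only [Fintype.card_option, Fintype.card_prod, Fintype.card_fun, Fintype.card_fin,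
      two_mul, pow_add]
end

section
/- Let G = (V, E) be a finite directed graph whose vertex set is partitioned into threads T₁, …, T_k, where each E = po ∪ hop, po is a union of disjoint total orders (one per thread, linking only vertices within the same thread), and hop is an arbitrary relation. If G contains a cycle, then G contains a 'beautiful' cycle of the form v₁ →_{po}* v₁' →_{hop} v₂ →_{po}* v₂' →_{hop} … →_{hop} vₙ →_{po}* vₙ' →_{hop} v₁ in which each thread is visited at most once (the threads of v₁, …, vₙ are pairwise distinct). -/
namespace BeautifulCycleAux

variable {V T : Type*}

/-- Composite step: a po*-segment followed by a single hop edge. -/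
def S (po hop : V → V → Prop) (a b : V) : Prop :=
  ∃ w, Relation.ReflTransGen po a w ∧ hop w b

/-- A cyclic sequence of composite steps, indexed by naturals mod `m`. -/
def Cyc (po hop : V → V → Prop) (m : ℕ) (g : ℕ → V) : Prop :=
  0 < m ∧ ∀ i < m, S po hop (g i) (g ((i + 1) % m))

theorem po_S {po hop : V → V → Prop} {a b c : V}
    (h1 : Relation.ReflTransGen po a b) (h2 : S po hop b c) : S po hop a c := by
  obtain ⟨w, hw1, hw2⟩ := h2
  exact ⟨w, h1.trans hw1, hw2⟩

theorem find_hop {po hop : V → V → Prop} {a b : V}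
    (h : Relation.TransGen (fun x y => po x y ∨ hop x y) a b) :
    Relation.TransGen po a b ∨
      ∃ x y, Relation.ReflTransGen (fun x y => po x y ∨ hop x y) a x ∧ hop x y ∧
        Relation.ReflTransGen (fun x y => po x y ∨ hop x y) y b := by
  induction h with
  | single h =>
    rcases h with h | h
    · exact Or.inl (Relation.TransGen.single h)
    · exact Or.inr ⟨a, _, Relation.ReflTransGen.refl, h, Relation.ReflTransGen.refl⟩
  | tail hab hbc ih =>
    rcases hbc with h | h
    · rcases ih with ih | ⟨x, y, h1, h2, h3⟩
      · exact Or.inl (ih.tail h)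
      · exact Or.inr ⟨x, y, h1, h2, h3.tail (Or.inl h)⟩
    · rcases ih with ih | ⟨x, y, h1, h2, h3⟩
      · refine Or.inr ⟨_, _, ?_, h, Relation.ReflTransGen.refl⟩
        exact Relation.TransGen.to_reflTransGen (Relation.TransGen.mono (fun x y h => Or.inl h) _ _ ih)
      · exact Or.inr ⟨x, y, h1, h2, h3.tail (Or.inr h)⟩

theorem pathS {po hop : V → V → Prop} {a b : V}
    (h : Relation.ReflTransGen (fun x y => po x y ∨ hop x y) a b) :
    ∃ d, Relation.ReflTransGen (S po hop) a d ∧ Relation.ReflTransGen po d b := by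
  induction h with
  | refl => exact ⟨a, .refl, .refl⟩
  | tail hab hbc ih =>
    obtain ⟨d, hd1, hd2⟩ := ih
    rcases hbc with h | h
    · exact ⟨d, hd1, hd2.tail h⟩
    · exact ⟨_, hd1.tail ⟨_, hd2, h⟩, .refl⟩

theorem exists_S_cycle {po hop : V → V → Prop}
    (hpo_acyclic : ∀ a, ¬ Relation.TransGen po a a)
    (hcycle : ∃ a, Relation.TransGen (fun x y => po x y ∨ hop x y) a a) :
    ∃ x, Relation.TransGen (S po hop) x x := by
  obtain ⟨a, ha⟩ := hcycle
  rcases find_hop ha with h | ⟨x, y, h1, h2, h3⟩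
  · exact absurd h (hpo_acyclic a)
  · obtain ⟨d, hd1, hd2⟩ := pathS (h3.trans h1)
    exact ⟨y, Relation.TransGen.tail' hd1 ⟨x, hd2, h2⟩⟩

theorem path_fun {R : V → V → Prop} {y z : V} (h : Relation.ReflTransGen R y z) :
    ∃ (m : ℕ) (g : ℕ → V), g 0 = y ∧ g m = z ∧ ∀ i < m, R (g i) (g (i + 1)) := by
  induction h with
  | refl => exact ⟨0, fun _ => y, rfl, rfl, by omega⟩
  | @tail b c hab hbc ih =>
    obtain ⟨m, g, h0, hm, hstep⟩ := ih
    refine ⟨m + 1, fun k => if k ≤ m then g k else c, by simp [h0], by simp, ?_⟩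
    intro i hi
    by_cases h' : i < m
    · simpa [Nat.le_of_lt h', Nat.succ_le_of_lt h'] using hstep i h'
    · have hieq : i = m := by omega
      subst hieq
      simpa [hm, Nat.lt_irrefl] using hbc

theorem cyc_of_transGen {po hop : V → V → Prop} {x : V}
    (h : Relation.TransGen (S po hop) x x) :
    ∃ (m : ℕ) (g : ℕ → V), Cyc po hop m g := by
  obtain ⟨y, hxy, hyx⟩ := Relation.TransGen.head'_iff.mp h
  obtain ⟨m, g, h0, hm, hstep⟩ := path_fun hyx
  refine ⟨m + 1, fun k => if k = 0 then x else g (k - 1), Nat.succ_pos m, ?_⟩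
  intro i hi
  rcases Nat.eq_zero_or_pos i with rfl | hpos
  · rcases Nat.eq_zero_or_pos m with rfl | hmpos
    · have hyeq : y = x := by rw [← h0, hm]
      simpa using hyeq ▸ hxy
    · have e : (0 + 1) % (m + 1) = 1 := Nat.mod_eq_of_lt (by omega)
      rw [e]
      simpa [h0] using hxy
  · have hne : i ≠ 0 := Nat.pos_iff_ne_zero.mp hpos
    by_cases hlast : i = m
    · subst hlast
      have e : (i + 1) % (i + 1) = 0 := Nat.mod_self _
      rw [e]
      have := hstep (i - 1) (by omega)
      have e2 : i - 1 + 1 = i := by omega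
      rw [e2] at this
      simp only [if_neg hne, if_pos rfl]
      rwa [hm] at this
    · have e : (i + 1) % (m + 1) = i + 1 := Nat.mod_eq_of_lt (by omega)
      rw [e]
      have := hstep (i - 1) (by omega)
      have e2 : i - 1 + 1 = i := by omega
      rw [e2] at this
      simp only [if_neg hne, if_neg (by omega : ¬ i + 1 = 0)]
      simpa using this

theorem surgery {po hop : V → V → Prop} {thread : V → T}
    (hpo_total : ∀ a b, thread a = thread b → a ≠ b →
        Relation.TransGen po a b ∨ Relation.TransGen po b a)
    {m : ℕ} {g : ℕ → V} (hc : Cyc po hop m g) {i j : ℕ}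
    (hij : i < j) (hjm : j < m) (ht : thread (g i) = thread (g j)) :
    ∃ (m' : ℕ) (g' : ℕ → V), Cyc po hop m' g' ∧ m' < m := by
  obtain ⟨hm, hstep⟩ := hc
  have hpo2 : Relation.ReflTransGen po (g i) (g j) ∨ Relation.ReflTransGen po (g j) (g i) := by
    rcases eq_or_ne (g i) (g j) with h | h
    · exact Or.inl (h ▸ Relation.ReflTransGen.refl)
    · rcases hpo_total _ _ ht h with h' | h'
      · exact Or.inl h'.to_reflTransGen
      · exact Or.inr h'.to_reflTransGen
  rcases hpo2 with hpp | hpp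
  · -- po* (g i) (g j): keep 0..i and j+1..m-1
    refine ⟨m - (j - i), fun k => if k ≤ i then g k else g (k + (j - i)), ⟨by omega, ?_⟩, by omega⟩
    intro k hk
    dsimp only
    have hedge : S po hop (g i) (g ((j + 1) % m)) := po_S hpp (hstep j hjm)
    by_cases h1 : k < i
    · rw [Nat.mod_eq_of_lt (by omega : k + 1 < m - (j - i))]
      simp only [if_pos (by omega : k ≤ i), if_pos (by omega : k + 1 ≤ i)]
      have := hstep k (by omega)
      rwa [Nat.mod_eq_of_lt (by omega : k + 1 < m)] at this
    · by_cases h2 : k = i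
      · subst h2
        by_cases h3 : k + 1 < m - (j - k)
        · rw [Nat.mod_eq_of_lt h3]
          simp only [if_pos (le_refl k), if_neg (by omega : ¬ k + 1 ≤ k)]
          rw [(by omega : k + 1 + (j - k) = j + 1)]
          rwa [Nat.mod_eq_of_lt (by omega : j + 1 < m)] at hedge
        · have e : (k + 1) % (m - (j - k)) = 0 := by
            rw [(by omega : k + 1 = m - (j - k))]; exact Nat.mod_self _
          rw [e]
          simp only [if_pos (le_refl k), if_pos (by omega : (0:ℕ) ≤ k)]
          have e2 : (j + 1) % m = 0 := by
            rw [(by omega : j + 1 = m)]; exact Nat.mod_self _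
          rwa [e2] at hedge
      · -- k > i
        have h4 : i < k := by omega
        simp only [if_neg (by omega : ¬ k ≤ i)]
        by_cases h5 : k + 1 < m - (j - i)
        · rw [Nat.mod_eq_of_lt h5]
          simp only [if_neg (by omega : ¬ k + 1 ≤ i)]
          have := hstep (k + (j - i)) (by omega)
          rw [Nat.mod_eq_of_lt (by omega : k + (j - i) + 1 < m)] at this
          rw [(by omega : k + 1 + (j - i) = k + (j - i) + 1)]
          exact this
        · have e : (k + 1) % (m - (j - i)) = 0 := by
            rw [(by omega : k + 1 = m - (j - i))]; exact Nat.mod_self _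
          rw [e]
          simp only [if_pos (by omega : (0:ℕ) ≤ i)]
          rw [(by omega : k + (j - i) = m - 1)]
          have := hstep (m - 1) (by omega)
          have e2 : (m - 1 + 1) % m = 0 := by
            rw [(by omega : m - 1 + 1 = m)]; exact Nat.mod_self _
          rwa [e2] at this
  · -- po* (g j) (g i): keep i+1..j
    refine ⟨j - i, fun k => g (i + 1 + k), ⟨by omega, ?_⟩, by omega⟩
    intro k hk
    dsimp only
    have hedge : S po hop (g j) (g (i + 1)) := by
      have := hstep i (by omega)
      rw [Nat.mod_eq_of_lt (by omega : i + 1 < m)] at this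
      exact po_S hpp this
    by_cases h1 : k + 1 < j - i
    · rw [Nat.mod_eq_of_lt h1]
      have := hstep (i + 1 + k) (by omega)
      rw [Nat.mod_eq_of_lt (by omega : i + 1 + k + 1 < m)] at this
      rw [(by omega : i + 1 + (k + 1) = i + 1 + k + 1)]
      exact this
    · have e : (k + 1) % (j - i) = 0 := by
        rw [(by omega : k + 1 = j - i)]; exact Nat.mod_self _
      rw [e]
      rw [(by omega : i + 1 + k = j)]
      simpa using hedge

theorem minimize {po hop : V → V → Prop} {thread : V → T}
    (hpo_total : ∀ a b, thread a = thread b → a ≠ b →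
        Relation.TransGen po a b ∨ Relation.TransGen po b a) :
    ∀ (m : ℕ) (g : ℕ → V), Cyc po hop m g → ∃ (m' : ℕ) (g' : ℕ → V), Cyc po hop m' g' ∧
      ∀ i j, i < m' → j < m' → thread (g' i) = thread (g' j) → i = j := by
  intro m
  induction m using Nat.strong_induction_on with
  | _ m ih =>
    intro g hc
    by_cases h : ∃ i j, i < j ∧ j < m ∧ thread (g i) = thread (g j)
    · obtain ⟨i, j, hij, hjm, ht⟩ := h
      obtain ⟨m', g', hc', hlt⟩ := surgery hpo_total hc hij hjm ht
      exact ih m' hlt g' hc'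
    · push_neg at h
      refine ⟨m, g, hc, ?_⟩
      intro i j hi hj ht
      by_contra hne
      rcases Nat.lt_or_ge i j with h' | h'
      · exact h i j h' hj ht
      · exact h j i (by omega) hi ht.symm

end BeautifulCycleAux

/-- in a finite directed graph whose vertices are partitioned into threads,
where `po` links only vertices of the same thread and is (the successor structure of) a
strict total order within each thread (expressed as: its transitive closure is irreflexive
and any two distinct vertices of a common thread are comparable), and `hop` is arbitrary:
if the graph `po ∪ hop` has a cycle, then it has a "beautiful" cycle
`v₁ →po* w₁ →hop v₂ →po* w₂ →hop … →hop vₘ →po* wₘ →hop v₁`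
whose segments visit pairwise distinct threads. -/
theorem beautiful_cycle {V T : Type*} [Fintype V] (thread : V → T)
    (po hop : V → V → Prop)
    (hpo_thread : ∀ a b, po a b → thread a = thread b)
    (hpo_acyclic : ∀ a, ¬ Relation.TransGen po a a)
    (hpo_total : ∀ a b, thread a = thread b → a ≠ b →
        Relation.TransGen po a b ∨ Relation.TransGen po b a)
    (hcycle : ∃ a, Relation.TransGen (fun x y => po x y ∨ hop x y) a a) :
    ∃ (m : ℕ) (hm : 0 < m) (v w : Fin m → V),
      Function.Injective (fun i => thread (v i)) ∧
      (∀ i, Relation.ReflTransGen po (v i) (w i)) ∧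
      (∀ i : Fin m, hop (w i) (v ⟨((i : ℕ) + 1) % m, Nat.mod_lt _ hm⟩)) := by
  obtain ⟨x, hx⟩ := BeautifulCycleAux.exists_S_cycle hpo_acyclic hcycle
  obtain ⟨m0, g0, hc0⟩ := BeautifulCycleAux.cyc_of_transGen hx
  obtain ⟨m, g, ⟨hm, hstep⟩, hinj⟩ := BeautifulCycleAux.minimize hpo_total m0 g0 hc0
  choose w hw1 hw2 using fun (i : Fin m) => hstep i.val i.isLt
  refine ⟨m, hm, fun i => g i.val, w, ?_, fun i => hw1 i, fun i => hw2 i⟩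
  intro a b hab
  exact Fin.ext (hinj _ _ a.isLt b.isLt hab)
end

section
/- Deleting the events of a single instruction that is po-maximal in its thread and has no incoming dependency arcs from other instructions preserves well-formedness of the trace: if T = (N, po, co, src, cf) is a trace, v ∈ N is po-maximal in its thread, and no arc of src, addr-dependence, or data-dependence leaves v into another node's dependencies, then the restriction of T to N \ {v} (restricting po, co, src and recomputing cf) is again a trace whose happens-before relation is the restriction of hb to N \ {v} (up to the cf edges incident to v). -/
/-- A trace-like structure: nodes `N` carry a thread, an address, and store/load flags,
and there are four relations: program order `po` (per-thread successor structure),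
coherence order `co`, source order `src`, and conflict order `cf`. -/
structure PreTrace (N T A : Type*) where
  thread : N → T
  addr : N → A
  isStore : N → Prop
  isLoad : N → Prop
  po : N → N → Prop
  co : N → N → Prop
  src : N → N → Prop
  cf : N → N → Prop

namespace PreTrace

variable {N T A : Type*}

/-- Well-formedness of a trace: `po` is a per-thread acyclic successor structure whose
transitive closure totally orders each thread; `co` is a per-address strict total order
on stores; `src` assigns to each load exactly one store of the same address; and
`cf = src⁻¹ ; co`. -/
def WF (τ : PreTrace N T A) : Prop :=
  (∀ a b, τ.po a b → τ.thread a = τ.thread b) ∧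
  (∀ a b c, τ.po a b → τ.po a c → b = c) ∧
  (∀ a b c, τ.po b a → τ.po c a → b = c) ∧
  (∀ a, ¬ Relation.TransGen τ.po a a) ∧
  (∀ a b, τ.thread a = τ.thread b → a ≠ b →
      Relation.TransGen τ.po a b ∨ Relation.TransGen τ.po b a) ∧
  (∀ a b, τ.co a b → τ.isStore a ∧ τ.isStore b ∧ τ.addr a = τ.addr b) ∧
  (∀ a, ¬ τ.co a a) ∧
  (∀ a b c, τ.co a b → τ.co b c → τ.co a c) ∧
  (∀ a b, τ.isStore a → τ.isStore b → τ.addr a = τ.addr b → a ≠ b →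
      τ.co a b ∨ τ.co b a) ∧
  (∀ a b, τ.src a b → τ.isStore a ∧ τ.isLoad b ∧ τ.addr a = τ.addr b) ∧
  (∀ b, τ.isLoad b → ∃! a, τ.src a b) ∧
  (∀ a b, τ.cf a b ↔ ∃ c, τ.src c a ∧ τ.co c b)

/-- Restriction of a trace to the nodes different from `v`
(restricting `po`, `co`, `src` and recomputing `cf`). -/
def restrict (τ : PreTrace N T A) (v : N) : PreTrace {x : N // x ≠ v} T A where
  thread x := τ.thread x
  addr x := τ.addr x
  isStore x := τ.isStore x
  isLoad x := τ.isLoad x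
  po x y := τ.po x y
  co x y := τ.co x y
  src x y := τ.src x y
  cf x y := ∃ c : {x : N // x ≠ v}, τ.src c x ∧ τ.co c y

/-- Happens-before relation of a trace. -/
def hb (τ : PreTrace N T A) (a b : N) : Prop :=
  τ.po a b ∨ τ.co a b ∨ τ.src a b ∨ τ.cf a b

end PreTrace

/-- deleting a po-maximal node `v` with no outgoing `src`,
address-dependence or data-dependence arcs preserves well-formedness, and the
happens-before relation of the restricted trace is the restriction of the original
happens-before relation to the remaining nodes. -/
theorem delete_maximal_node_preserves_trace {N T A : Type*}
    (τ : PreTrace N T A) (addrDep dataDep : N → N → Prop) (v : N)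
    (hWF : τ.WF)
    (hmax : ∀ w, ¬ τ.po v w)
    (hnodep : ∀ w, ¬ τ.src v w ∧ ¬ addrDep v w ∧ ¬ dataDep v w) :
    (τ.restrict v).WF ∧
    (∀ a b : {x : N // x ≠ v}, (τ.restrict v).hb a b ↔ τ.hb a b) := by
  obtain ⟨h1, h2, h3, h4, h5, h6, h7, h8, h9, h10, h11, h12⟩ := hWF
  have hlift : ∀ {a b : N} (ha : a ≠ v) (hb : b ≠ v),
      Relation.TransGen τ.po a b →
      Relation.TransGen (τ.restrict v).po (⟨a, ha⟩ : {x : N // x ≠ v}) ⟨b, hb⟩ := by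
    intro a b ha hb h
    induction h with
    | single h => exact Relation.TransGen.single h
    | tail h step ih =>
        rename_i b' c
        have hb' : b' ≠ v := by rintro rfl; exact hmax _ step
        exact Relation.TransGen.tail (ih hb') step
  have hproj : ∀ {a b : {x : N // x ≠ v}},
      Relation.TransGen (τ.restrict v).po a b → Relation.TransGen τ.po a.1 b.1 :=
    fun h => Relation.TransGen.lift Subtype.val (fun _ _ h => h) _ _ h
  refine ⟨⟨fun a b h => h1 _ _ h, fun a b c hb hc => Subtype.ext (h2 _ _ _ hb hc),
      fun a b c hb hc => Subtype.ext (h3 _ _ _ hb hc),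
      fun a h => h4 a.1 (hproj h),
      fun a b ht hne => ?_,
      fun a b h => h6 _ _ h, fun a => h7 a.1,
      fun a b c hab hbc => h8 _ _ _ hab hbc,
      fun a b sa sb haddr hne => ?_,
      fun a b h => h10 _ _ h,
      fun b hb => ?_, fun a b => Iff.rfl⟩, fun a b => ?_⟩
  · rcases h5 a.1 b.1 ht (fun h => hne (Subtype.ext h)) with h | h
    · exact Or.inl (hlift a.2 b.2 h)
    · exact Or.inr (hlift b.2 a.2 h)
  · exact h9 _ _ sa sb haddr (fun h => hne (Subtype.ext h))
  · obtain ⟨a, ha, hu⟩ := h11 b.1 hb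
    have hav : a ≠ v := fun h => (hnodep b.1).1 (h ▸ ha)
    exact ⟨⟨a, hav⟩, ha, fun c hc => Subtype.ext (hu c.1 hc)⟩
  · constructor
    · rintro (h | h | h | ⟨c, hs, hc⟩)
      · exact Or.inl h
      · exact Or.inr (Or.inl h)
      · exact Or.inr (Or.inr (Or.inl h))
      · exact Or.inr (Or.inr (Or.inr ((h12 _ _).2 ⟨c.1, hs, hc⟩)))
    · rintro (h | h | h | h)
      · exact Or.inl h
      · exact Or.inr (Or.inl h)
      · exact Or.inr (Or.inr (Or.inl h))
      · obtain ⟨c, hs, hc⟩ := (h12 _ _).1 h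
        have hcv : c ≠ v := fun h => (hnodep a.1).1 (h ▸ hs)
        exact Or.inr (Or.inr (Or.inr ⟨⟨c, hcv⟩, hs, hc⟩))
end
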